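/- If a finite ranked partially ordered set with 0̂ and 1̂ admits an EL-labeling (is lexicographically shellable), then for every interval [x,y], the Möbius function satisfies (-1)^{rank(y)-rank(x)} μ(x,y) equals the number of maximal chains in [x,y] with strictly decreasing label sequences, and in particular the Möbius function alternates in sign. -/

import Mathlib

set_option linter.unusedSectionVars false


/-- `l` is a maximal chain of the interval `[x, y]`: a list of elements starting at `x`,
ending at `y`, in which each element covers the previous one. -/
def IsMaxChain' {P : Type*} [PartialOrder P] (l : List P) (x y : P) : Prop :=
  l.Chain' (· ⋖ ·) ∧ l.head? = some x ∧ l.getLast? = some y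

/-- The sequence of edge labels along a chain `l`. -/
def labelSeq {P Λ : Type*} (lab : P → P → Λ) (l : List P) : List Λ :=
  (l.zip l.tail).map fun p => lab p.1 p.2

namespace ELAux

variable {P : Type*} [PartialOrder P] {Λ : Type*} [LinearOrder Λ]

theorem labelSeq_nil (lab : P → P → Λ) : labelSeq lab ([] : List P) = [] := rfl
theorem labelSeq_single (lab : P → P → Λ) (a : P) : labelSeq lab [a] = [] := rfl
theorem labelSeq_cons_cons (lab : P → P → Λ) (a b : P) (t : List P) :
    labelSeq lab (a :: b :: t) = lab a b :: labelSeq lab (b :: t) := rfl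

theorem labelSeq_cons_head (lab : P → P → Λ) (a : P) {l : List P} {b : P}
    (h : l.head? = some b) : labelSeq lab (a :: l) = lab a b :: labelSeq lab l := by
  cases l with
  | nil => simp at h
  | cons c t =>
    simp only [List.head?_cons, Option.some.injEq] at h
    subst h; rfl

theorem labelSeq_concat (lab : P → P → Λ) :
    ∀ (c : List P) (zl : P), c.getLast? = some zl →
      ∀ w, labelSeq lab (c ++ [w]) = labelSeq lab c ++ [lab zl w]
  | [], zl, h, w => by simp at h
  | [a], zl, h, w => by
      simp only [List.getLast?_singleton, Option.some.injEq] at h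
      subst h; rfl
  | a :: b :: t, zl, h, w => by
      rw [List.getLast?_cons_cons] at h
      have ih := labelSeq_concat lab (b :: t) zl h w
      simp only [List.cons_append, labelSeq_cons_cons] at *
      rw [ih]

theorem chain_le : ∀ (c : List P), c.Chain' (· ⋖ ·) → ∀ (a b : P),
    c.head? = some a → c.getLast? = some b → a ≤ b
  | [], _, a, b, ha, _ => by simp at ha
  | [c0], _, a, b, ha, hb => by
      simp only [List.head?_cons, Option.some.injEq] at ha
      simp only [List.getLast?_singleton, Option.some.injEq] at hb
      subst ha; subst hb; rfl
  | c0 :: c1 :: t, hch, a, b, ha, hb => by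
      simp only [List.head?_cons, Option.some.injEq] at ha
      subst ha
      simp only [List.Chain'] at hch
      rw [List.isChain_cons_cons] at hch
      rw [List.getLast?_cons_cons] at hb
      exact le_trans hch.1.le (chain_le (c1 :: t) hch.2 c1 b rfl hb)

theorem chain_rank (rk : P → ℕ) (hrk_cov : ∀ x y : P, x ⋖ y → rk y = rk x + 1) :
    ∀ (c : List P), c.Chain' (· ⋖ ·) → ∀ (a b : P),
    c.head? = some a → c.getLast? = some b → rk b + 1 = rk a + c.length
  | [], _, a, b, ha, _ => by simp at ha
  | [c0], _, a, b, ha, hb => by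
      simp only [List.head?_cons, Option.some.injEq] at ha
      simp only [List.getLast?_singleton, Option.some.injEq] at hb
      subst ha; subst hb; simp
  | c0 :: c1 :: t, hch, a, b, ha, hb => by
      simp only [List.head?_cons, Option.some.injEq] at ha
      subst ha
      simp only [List.Chain'] at hch
      rw [List.isChain_cons_cons] at hch
      rw [List.getLast?_cons_cons] at hb
      have ih := chain_rank rk hrk_cov (c1 :: t) hch.2 c1 b rfl hb
      have := hrk_cov _ _ hch.1
      simp only [List.length_cons] at *
      omega

theorem maxChain_self (rk : P → ℕ) (hrk_cov : ∀ x y : P, x ⋖ y → rk y = rk x + 1)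
    {l : List P} {z : P} (h : IsMaxChain' l z z) : l = [z] := by
  obtain ⟨hch, hhd, hlast⟩ := h
  have hr := chain_rank rk hrk_cov l hch z z hhd hlast
  have hlen : l.length = 1 := by omega
  match l, hlen with
  | [a], _ =>
    simp only [List.head?_cons, Option.some.injEq] at hhd
    subst hhd; rfl

theorem chain_length_le [Fintype P] (c : List P) (h : c.Chain' (· ⋖ ·)) :
    c.length ≤ Fintype.card P := by
  have h2 : c.Chain' (· < ·) := h.imp fun _ _ h => h.lt
  have hp : c.Pairwise (· < ·) := List.isChain_iff_pairwise.mp h2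
  exact List.Nodup.length_le_card (hp.imp ne_of_lt)

def decSet (lab : P → P → Λ) (x y : P) : Set (List P) :=
  {l | IsMaxChain' l x y ∧ (labelSeq lab l).Chain' (fun a b => b < a)}

def tSet (lab : P → P → Λ) (x y : P) : Set (List P) :=
  {c | c.Chain' (· ⋖ ·) ∧ c.head? = some x ∧
    (labelSeq lab c).Chain' (fun a b => b < a) ∧ ∃ z, c.getLast? = some z ∧ z ≤ y}

theorem decSet_finite [Fintype P] (lab : P → P → Λ) (x y : P) : (decSet lab x y).Finite :=
  Set.Finite.subset (List.finite_length_le P (Fintype.card P))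
    (fun c hc => chain_length_le c hc.1.1)

theorem tSet_finite [Fintype P] (lab : P → P → Λ) (x y : P) : (tSet lab x y).Finite :=
  Set.Finite.subset (List.finite_length_le P (Fintype.card P))
    (fun c hc => chain_length_le c hc.1)

section Inc

variable (lab : P → P → Λ) {y : P}

/-- Abbreviation for the hypothesis: every lower interval `[z,y]` has a unique
weakly increasing maximal chain. -/
def IncHyp (lab : P → P → Λ) (y : P) : Prop :=
  ∀ z : P, z ≤ y → ∃ l : List P,
    (IsMaxChain' l z y ∧ (labelSeq lab l).Chain' (· ≤ ·)) ∧
    (∀ l' : List P, IsMaxChain' l' z y → (labelSeq lab l').Chain' (· ≤ ·) → l' = l)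

open Classical in
/-- The increasing chain from `z` to `y`. -/
noncomputable def incC (hE : IncHyp lab y) (z : P) : List P :=
  if h : z ≤ y then (hE z h).choose else []

/-- The second element of the increasing chain from `z` to `y`. -/
noncomputable def nxtC (hE : IncHyp lab y) (z : P) : P := (incC lab hE z).getD 1 z

variable (hE : IncHyp lab y)

theorem incC_spec {z : P} (hz : z ≤ y) :
    IsMaxChain' (incC lab hE z) z y ∧ (labelSeq lab (incC lab hE z)).Chain' (· ≤ ·) := by
  rw [incC, dif_pos hz]; exact (hE z hz).choose_spec.1

theorem incC_unique {z : P} (hz : z ≤ y) {l' : List P} (h1 : IsMaxChain' l' z y)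
    (h2 : (labelSeq lab l').Chain' (· ≤ ·)) : l' = incC lab hE z := by
  rw [incC, dif_pos hz]; exact (hE z hz).choose_spec.2 l' h1 h2

theorem incC_self (rk : P → ℕ) (hrk_cov : ∀ x y : P, x ⋖ y → rk y = rk x + 1) :
    incC lab hE y = [y] :=
  maxChain_self rk hrk_cov (incC_spec lab hE le_rfl).1

theorem incC_structure {z : P} (hz : z ≤ y) (hne : z ≠ y) :
    ∃ t, incC lab hE z = z :: nxtC lab hE z :: t := by
  obtain ⟨⟨hch, hhd, hlast⟩, hlb⟩ := incC_spec lab hE hz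
  cases hI : incC lab hE z with
  | nil => rw [hI] at hhd; simp at hhd
  | cons a t0 =>
    rw [hI] at hhd hlast
    simp only [List.head?_cons, Option.some.injEq] at hhd
    rw [hhd] at hI hlast
    cases t0 with
    | nil =>
      simp only [List.getLast?_singleton, Option.some.injEq] at hlast
      exact absurd hlast hne
    | cons b t =>
      refine ⟨t, ?_⟩
      have hb : nxtC lab hE z = b := by rw [nxtC, hI]; rfl
      rw [hb, hhd]

theorem nxt_facts {z : P} (hz : z ≤ y) (hne : z ≠ y) :
    z ⋖ nxtC lab hE z ∧ nxtC lab hE z ≤ y ∧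
      incC lab hE z = z :: incC lab hE (nxtC lab hE z) ∧
      labelSeq lab (incC lab hE z) =
        lab z (nxtC lab hE z) :: labelSeq lab (incC lab hE (nxtC lab hE z)) := by
  obtain ⟨t, hI⟩ := incC_structure lab hE hz hne
  obtain ⟨⟨hch, hhd, hlast⟩, hlb⟩ := incC_spec lab hE hz
  set w := nxtC lab hE z with hw
  simp only [List.Chain'] at hch
  rw [hI, List.isChain_cons_cons] at hch
  rw [hI, List.getLast?_cons_cons] at hlast
  have hcov : z ⋖ w := hch.1
  have hwy : w ≤ y := chain_le (w :: t) hch.2 w y rfl hlast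
  have htailmc : IsMaxChain' (w :: t) w y := ⟨hch.2, rfl, hlast⟩
  have hlbt : (labelSeq lab (w :: t)).Chain' (· ≤ ·) := by
    rw [hI, labelSeq_cons_cons] at hlb
    exact hlb.tail
  have htl : w :: t = incC lab hE w := incC_unique lab hE hwy htailmc hlbt
  refine ⟨hcov, hwy, ?_, ?_⟩
  · rw [hI, htl]
  · rw [hI, labelSeq_cons_cons, htl]

/-- U1: consecutive labels along the increasing chain are increasing. -/
theorem lab_nxt_le {z : P} (hz : z ≤ y) (hne : z ≠ y) (hwne : nxtC lab hE z ≠ y) :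
    lab z (nxtC lab hE z) ≤ lab (nxtC lab hE z) (nxtC lab hE (nxtC lab hE z)) := by
  obtain ⟨hcov, hwy, hIz, hlz⟩ := nxt_facts lab hE hz hne
  obtain ⟨hcov2, hwy2, hIw, hlw⟩ := nxt_facts lab hE hwy hwne
  have hlb := (incC_spec lab hE hz).2
  simp only [List.Chain'] at hlb
  rw [hlz, hlw, List.isChain_cons_cons] at hlb
  exact hlb.1

/-- U2: extending the increasing chain downward by a cover with small label. -/
theorem ext_inc (rk : P → ℕ) (hrk_cov : ∀ x y : P, x ⋖ y → rk y = rk x + 1)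
    {z' z : P} (hz : z ≤ y) (hcov : z' ⋖ z)
    (hcond : z = y ∨ lab z' z ≤ lab z (nxtC lab hE z)) :
    nxtC lab hE z' = z := by
  have hz'y : z' ≤ y := le_trans hcov.le hz
  obtain ⟨⟨hch, hhd, hlast⟩, hlb⟩ := incC_spec lab hE hz
  obtain ⟨r, hIz⟩ : ∃ r, incC lab hE z = z :: r := by
    cases hI : incC lab hE z with
    | nil => rw [hI] at hhd; simp at hhd
    | cons a t0 =>
      rw [hI] at hhd
      simp only [List.head?_cons, Option.some.injEq] at hhd
      subst hhd; exact ⟨t0, rfl⟩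
  have hmc : IsMaxChain' (z' :: incC lab hE z) z' y := by
    refine ⟨?_, rfl, ?_⟩
    · simp only [List.Chain']
      rw [hIz, List.isChain_cons_cons]
      exact ⟨hcov, by rw [← hIz]; exact hch⟩
    · rw [hIz] at hlast
      rw [hIz, List.getLast?_cons_cons]
      exact hlast
  have hlb' : (labelSeq lab (z' :: incC lab hE z)).Chain' (· ≤ ·) := by
    rw [labelSeq_cons_head lab z' (by rw [hIz]; rfl : (incC lab hE z).head? = some z)]
    simp only [List.Chain']
    rw [List.isChain_cons]
    refine ⟨?_, hlb⟩
    intro b hb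
    by_cases hzy : z = y
    · subst hzy
      rw [incC_self lab hE rk hrk_cov] at hb
      simp [labelSeq_single] at hb
    · obtain ⟨_, _, _, hlz⟩ := nxt_facts lab hE hz hzy
      rw [hlz] at hb
      simp only [List.head?_cons, Option.mem_def, Option.some.injEq] at hb
      subst hb
      rcases hcond with h | h
      · exact absurd h hzy
      · exact h
  have heq : z' :: incC lab hE z = incC lab hE z' := incC_unique lab hE hz'y hmc hlb'
  rw [nxtC, ← heq, hIz]
  rfl


def canExtC (hE : IncHyp lab y) (x : P) (c : List P) : Prop :=
  (c.getLast?.getD x ≠ y) ∧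
    ∀ a ∈ (labelSeq lab c).getLast?,
      lab (c.getLast?.getD x) (nxtC lab hE (c.getLast?.getD x)) < a

open Classical in
noncomputable def gC (hE : IncHyp lab y) (x : P) (c : List P) : List P :=
  if canExtC lab hE x c then c ++ [nxtC lab hE (c.getLast?.getD x)] else c.dropLast

theorem H1 {x : P} {c : List P} (hc : c ∈ tSet lab x y) (hce : canExtC lab hE x c) :
    gC lab hE x c ∈ tSet lab x y ∧ ¬ canExtC lab hE x (gC lab hE x c) ∧
      gC lab hE x (gC lab hE x c) = c ∧ (gC lab hE x c).length = c.length + 1 := by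
  obtain ⟨hch, hhd, hdec, z, hlz, hzy⟩ := hc
  have hzl : c.getLast?.getD x = z := by rw [hlz]; rfl
  have hne : z ≠ y := by have := hce.1; rwa [hzl] at this
  have hlt : ∀ a ∈ (labelSeq lab c).getLast?, lab z (nxtC lab hE z) < a := by
    have := hce.2; rwa [hzl] at this
  obtain ⟨hzw, hwy, hIz, hlIz⟩ := nxt_facts lab hE hzy hne
  set w := nxtC lab hE z with hw
  have hcne : c ≠ [] := by rintro rfl; simp at hhd
  have hgc : gC lab hE x c = c ++ [w] := by rw [gC, if_pos hce, hzl]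
  have hlab' : labelSeq lab (c ++ [w]) = labelSeq lab c ++ [lab z w] :=
    labelSeq_concat lab c z hlz w
  have hmem' : c ++ [w] ∈ tSet lab x y := by
    refine ⟨?_, ?_, ?_, w, ?_, hwy⟩
    · refine List.IsChain.append hch (List.isChain_singleton w) ?_
      intro a ha b hb
      simp only [List.head?_cons, Option.mem_def, Option.some.injEq] at hb
      rw [hlz] at ha
      simp only [Option.mem_def, Option.some.injEq] at ha
      subst ha; subst hb
      exact hzw
    · rw [List.head?_append_of_ne_nil c hcne]; exact hhd
    · rw [hlab']
      refine List.IsChain.append hdec (List.isChain_singleton _) ?_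
      intro a ha b hb
      simp only [List.head?_cons, Option.mem_def, Option.some.injEq] at hb
      subst hb
      exact hlt a ha
    · simp
  have hnotext : ¬ canExtC lab hE x (c ++ [w]) := by
    rintro ⟨hne', hlt'⟩
    have hzl' : (c ++ [w]).getLast?.getD x = w := by simp
    rw [hzl'] at hne' hlt'
    have hlabw := lab_nxt_le lab hE hzy hne hne'
    have := hlt' (lab z w) (by rw [hlab']; simp)
    rw [← hw] at hlabw
    exact absurd hlabw (not_le.mpr this)
  refine ⟨by rw [hgc]; exact hmem', by rw [hgc]; exact hnotext, ?_, by rw [hgc]; simp⟩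
  rw [hgc, gC, if_neg hnotext, List.dropLast_concat]

theorem H2 (rk : P → ℕ) (hrk_cov : ∀ x y : P, x ⋖ y → rk y = rk x + 1)
    {x : P} (hxy : x < y) {c : List P} (hc : c ∈ tSet lab x y)
    (hnce : ¬ canExtC lab hE x c) :
    2 ≤ c.length ∧ gC lab hE x c ∈ tSet lab x y ∧ canExtC lab hE x (gC lab hE x c) ∧
      gC lab hE x (gC lab hE x c) = c ∧ (gC lab hE x c).length + 1 = c.length := by
  obtain ⟨hch, hhd, hdec, z, hlz, hzy⟩ := hc
  have hzl : c.getLast?.getD x = z := by rw [hlz]; rfl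
  have hcne : c ≠ [] := by rintro rfl; simp at hhd
  have hlen2 : 2 ≤ c.length := by
    by_contra h
    have h1 : c.length = 1 := by
      have := List.length_pos_of_ne_nil hcne; omega
    obtain ⟨a, rfl⟩ : ∃ a, c = [a] := by
      match c, h1 with | [a], _ => exact ⟨a, rfl⟩
    simp only [List.head?_cons, Option.some.injEq] at hhd
    simp only [List.getLast?_singleton, Option.some.injEq] at hlz
    apply hnce
    constructor
    · rw [hzl, ← hlz, hhd]
      exact hxy.ne
    · intro a' ha'
      simp [labelSeq_single] at ha'
  set d := c.dropLast with hd
  have hceq : d ++ [z] = c := List.dropLast_append_getLast? z hlz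
  have hdne : d ≠ [] := by
    intro h; rw [h] at hceq; rw [← hceq] at hlen2; simp at hlen2
  obtain ⟨z', hz'⟩ : ∃ z', d.getLast? = some z' :=
    ⟨d.getLast hdne, List.getLast?_eq_getLast_of_ne_nil hdne⟩
  have hchsplit : d.Chain' (· ⋖ ·) ∧ z' ⋖ z := by
    simp only [List.Chain'] at hch ⊢
    rw [← hceq, List.isChain_append] at hch
    exact ⟨hch.1, hch.2.2 z' hz' z rfl⟩
  have hlabc : labelSeq lab c = labelSeq lab d ++ [lab z' z] := by
    rw [← hceq]; exact labelSeq_concat lab d z' hz' z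
  have hdecd : (labelSeq lab d).Chain' (fun a b => b < a) ∧
      ∀ a ∈ (labelSeq lab d).getLast?, lab z' z < a := by
    simp only [List.Chain'] at hdec ⊢
    rw [hlabc, List.isChain_append] at hdec
    exact ⟨hdec.1, fun a ha => hdec.2.2 a ha (lab z' z) rfl⟩
  have hnce2 := hnce
  have hdisj : z = y ∨ lab z' z ≤ lab z (nxtC lab hE z) := by
    rw [canExtC, hzl, not_and_or] at hnce2
    rcases hnce2 with h | h
    · exact Or.inl (not_not.mp h)
    · right
      push_neg at h
      obtain ⟨a, ha, hle⟩ := h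
      rw [hlabc] at ha
      simp only [List.getLast?_concat, Option.mem_def, Option.some.injEq] at ha
      rw [← ha] at hle
      exact hle
  have hnxtz' : nxtC lab hE z' = z := ext_inc lab hE rk hrk_cov hzy hchsplit.2 hdisj
  have hz'y : z' < y := lt_of_lt_of_le hchsplit.2.lt hzy
  have hced : canExtC lab hE x d := by
    constructor
    · rw [hz']
      simp only [Option.getD_some]
      exact hz'y.ne
    · intro a ha
      rw [hz']
      simp only [Option.getD_some]
      rw [hnxtz']
      exact hdecd.2 a ha
  have hdmem : d ∈ tSet lab x y := by
    refine ⟨hchsplit.1, ?_, hdecd.1, z', hz', le_of_lt hz'y⟩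
    rw [← hceq, List.head?_append_of_ne_nil d hdne] at hhd
    exact hhd
  have hgc : gC lab hE x c = d := by rw [gC, if_neg hnce]
  have hgd : gC lab hE x d = c := by
    rw [gC, if_pos hced, hz']
    simp only [Option.getD_some]
    rw [hnxtz', hceq]
  have hlend : d.length + 1 = c.length := by
    rw [hd, List.length_dropLast]; omega
  exact ⟨hlen2, by rw [hgc]; exact hdmem, by rw [hgc]; exact hced,
    by rw [hgc]; exact hgd, by rw [hgc]; exact hlend⟩

theorem key_identity [Fintype P] (hE : IncHyp lab y) (rk : P → ℕ)
    (hrk_cov : ∀ x y : P, x ⋖ y → rk y = rk x + 1)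
    {x : P} (hxy : x < y) :
    ∑ c ∈ (tSet_finite lab x y).toFinset, (-1 : ℤ) ^ (c.length - 1) = 0 := by
  classical
  refine Finset.sum_involution (fun c _ => gC lab hE x c) ?_ ?_ ?_ ?_
  · intro c hc
    rw [Set.Finite.mem_toFinset] at hc
    have hcne : c ≠ [] := by
      have := hc.2.1; intro h; rw [h] at this; simp at this
    have h1 : 1 ≤ c.length := List.length_pos_of_ne_nil hcne
    by_cases hce : canExtC lab hE x c
    · obtain ⟨_, _, _, hlen⟩ := H1 lab hE hc hce
      rw [hlen]
      obtain ⟨m, hm⟩ : ∃ m, c.length = m + 1 := ⟨c.length - 1, by omega⟩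
      rw [hm]
      simp [pow_succ]
    · obtain ⟨hl2, _, _, _, hlen⟩ := H2 lab hE rk hrk_cov hxy hc hce
      obtain ⟨m, hm⟩ : ∃ m, c.length = m + 2 := ⟨c.length - 2, by omega⟩
      have hg : (gC lab hE x c).length = m + 1 := by omega
      rw [hm, hg]
      simp [pow_succ]
  · intro c hc _
    rw [Set.Finite.mem_toFinset] at hc
    show gC lab hE x c ≠ c
    intro heq
    have := congrArg List.length heq
    by_cases hce : canExtC lab hE x c
    · obtain ⟨_, _, _, hlen⟩ := H1 lab hE hc hce
      omega
    · obtain ⟨hl2, _, _, _, hlen⟩ := H2 lab hE rk hrk_cov hxy hc hce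
      omega
  · intro c hc
    rw [Set.Finite.mem_toFinset] at hc ⊢
    by_cases hce : canExtC lab hE x c
    · exact (H1 lab hE hc hce).1
    · exact (H2 lab hE rk hrk_cov hxy hc hce).2.1
  · intro c hc
    rw [Set.Finite.mem_toFinset] at hc
    by_cases hce : canExtC lab hE x c
    · exact (H1 lab hE hc hce).2.2.1
    · exact (H2 lab hE rk hrk_cov hxy hc hce).2.2.2.1


theorem sum_tset [Fintype P] (rk : P → ℕ)
    (hrk_cov : ∀ x y : P, x ⋖ y → rk y = rk x + 1)
    {x y : P} (S : Finset P) (hS : ∀ z, z ∈ S ↔ x ≤ z ∧ z ≤ y) :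
    ∑ z ∈ S, (-1 : ℤ) ^ (rk z - rk x) * ((decSet_finite lab x z).toFinset.card : ℤ)
      = ∑ c ∈ (tSet_finite lab x y).toFinset, (-1 : ℤ) ^ (c.length - 1) := by
  classical
  have hmaps : ∀ c ∈ (tSet_finite lab x y).toFinset,
      (fun c : List P => c.getLast?.getD x) c ∈ S := by
    intro c hc
    rw [Set.Finite.mem_toFinset] at hc
    obtain ⟨hch, hhd, _, z, hlz, hzy⟩ := hc
    simp only [hlz, Option.getD_some, hS]
    exact ⟨chain_le c hch x z hhd hlz, hzy⟩
  rw [← Finset.sum_fiberwise_of_maps_to hmaps (fun c => (-1 : ℤ) ^ (c.length - 1))]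
  refine Finset.sum_congr rfl ?_
  intro z hz
  rw [hS] at hz
  have hseteq : (tSet_finite lab x y).toFinset.filter
      (fun c => (fun c : List P => c.getLast?.getD x) c = z)
      = (decSet_finite lab x z).toFinset := by
    ext c
    simp only [Finset.mem_filter, Set.Finite.mem_toFinset]
    constructor
    · rintro ⟨⟨hch, hhd, hdec, z0, hlz0, hz0y⟩, hlast⟩
      rw [hlz0] at hlast
      simp only [Option.getD_some] at hlast
      subst hlast
      exact ⟨⟨hch, hhd, hlz0⟩, hdec⟩
    · rintro ⟨⟨hch, hhd, hlz⟩, hdec⟩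
      exact ⟨⟨hch, hhd, hdec, z, hlz, hz.2⟩, by rw [hlz]; rfl⟩
  rw [hseteq]
  have hconst : ∀ c ∈ (decSet_finite lab x z).toFinset,
      (-1 : ℤ) ^ (c.length - 1) = (-1 : ℤ) ^ (rk z - rk x) := by
    intro c hc
    rw [Set.Finite.mem_toFinset] at hc
    obtain ⟨⟨hch, hhd, hlz⟩, _⟩ := hc
    have := chain_rank rk hrk_cov c hch x z hhd hlz
    congr 1
    omega
  rw [Finset.sum_congr rfl hconst, Finset.sum_const, nsmul_eq_mul, mul_comm]

end Inc
end ELAux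


/-- If a finite graded bounded poset admits an EL-labeling (is lexicographically
shellable), then for every interval `[x, y]` the quantity
`(-1)^(rk y - rk x) μ(x, y)` equals the number of maximal chains of `[x, y]` with
strictly decreasing label sequence; in particular the Möbius function alternates
in sign. -/
theorem el_labeling_mobius
    {P : Type*} [PartialOrder P] [BoundedOrder P] [Fintype P]
    (rk : P → ℕ) (hrk_bot : rk ⊥ = 0)
    (hrk_cov : ∀ x y : P, x ⋖ y → rk y = rk x + 1)
    {Λ : Type*} [LinearOrder Λ] (lab : P → P → Λ)
    (hEL : ∀ x y : P, x ≤ y → ∃ l : List P,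
      (IsMaxChain' l x y ∧ (labelSeq lab l).Chain' (· ≤ ·)) ∧
      (∀ l' : List P, IsMaxChain' l' x y → (labelSeq lab l').Chain' (· ≤ ·) → l' = l) ∧
      (∀ l' : List P, IsMaxChain' l' x y → l' ≠ l →
        List.Lex (· < ·) (labelSeq lab l) (labelSeq lab l')))
    (mu : P → P → ℤ)
    (hmu_refl : ∀ x, mu x x = 1)
    (hmu_rec : ∀ x y, x < y → mu x y = -∑ᶠ z ∈ {z : P | x ≤ z ∧ z < y}, mu x z) :
    ∀ x y : P, x ≤ y →
      (-1 : ℤ) ^ (rk y - rk x) * mu x y =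
        (Nat.card {l : List P // IsMaxChain' l x y ∧
          (labelSeq lab l).Chain' (fun a b => b < a)} : ℤ) ∧
      0 ≤ (-1 : ℤ) ^ (rk y - rk x) * mu x y := by
  classical
  have hE : ∀ y : P, ELAux.IncHyp lab y := by
    intro y z hz
    obtain ⟨l, h1, h2, _⟩ := hEL z y hz
    exact ⟨l, h1, h2⟩
  have hsq : ∀ k : ℕ, ((-1 : ℤ) ^ k) * ((-1 : ℤ) ^ k) = 1 := by
    intro k
    rw [← pow_add]
    exact Even.neg_one_pow ⟨k, rfl⟩
  have hrk_mono : ∀ a b : P, a ≤ b → rk a ≤ rk b ∧ (a ≠ b → rk a < rk b) := by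
    intro a b hab
    obtain ⟨l, ⟨⟨hch, hhd, hlast⟩, _⟩, _⟩ := hEL a b hab
    have hr := ELAux.chain_rank rk hrk_cov l hch a b hhd hlast
    have hl1 : l ≠ [] := by rintro rfl; simp at hhd
    have hl1' : 1 ≤ l.length := List.length_pos_of_ne_nil hl1
    refine ⟨by omega, ?_⟩
    intro hne
    have h2 : 2 ≤ l.length := by
      by_contra h
      have h1 : l.length = 1 := by omega
      match l, h1 with
      | [c], _ =>
        simp only [List.head?_cons, Option.some.injEq] at hhd
        simp only [List.getLast?_singleton, Option.some.injEq] at hlast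
        exact hne (hhd ▸ hlast ▸ rfl)
    omega
  set D : P → P → ℤ := fun a b => ((ELAux.decSet_finite lab a b).toFinset.card : ℤ)
    with hDdef
  have hDnn : ∀ a b : P, 0 ≤ D a b := by
    intro a b
    simp only [hDdef]
    positivity
  have hDself : ∀ a : P, D a a = 1 := by
    intro a
    have hset : (ELAux.decSet_finite lab a a).toFinset = {[a]} := by
      ext l
      rw [Set.Finite.mem_toFinset, Finset.mem_singleton]
      constructor
      · rintro ⟨hmc, _⟩
        exact ELAux.maxChain_self rk hrk_cov hmc
      · rintro rfl
        exact ⟨⟨List.isChain_singleton a, rfl, rfl⟩, List.isChain_nil⟩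
    simp only [hDdef, hset, Finset.card_singleton, Nat.cast_one]
  have key : ∀ n : ℕ, ∀ a b : P, a ≤ b → rk b - rk a = n →
      mu a b = (-1 : ℤ) ^ (rk b - rk a) * D a b := by
    intro n
    induction n using Nat.strong_induction_on with
    | _ n ih =>
      intro a b hab hn
      rcases eq_or_lt_of_le hab with rfl | hlt
      · rw [hmu_refl, hDself]
        simp
      · have hmu := hmu_rec a b hlt
        have hset : {z : P | a ≤ z ∧ z < b}
            = ↑(Finset.univ.filter fun z => a ≤ z ∧ z < b) := by
          ext z; simp
        rw [hset, finsum_mem_coe_finset] at hmu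
        have hsum1 : ∑ z ∈ Finset.univ.filter (fun z => a ≤ z ∧ z < b), mu a z
            = ∑ z ∈ Finset.univ.filter (fun z => a ≤ z ∧ z < b),
                (-1 : ℤ) ^ (rk z - rk a) * D a z := by
          refine Finset.sum_congr rfl ?_
          intro z hz
          simp only [Finset.mem_filter, Finset.mem_univ, true_and] at hz
          have h1 := (hrk_mono a z hz.1).1
          have h2 := (hrk_mono z b hz.2.le).2 hz.2.ne
          exact ih _ (by omega) a z hz.1 rfl
        have hicc : Finset.univ.filter (fun z => a ≤ z ∧ z ≤ b)
            = insert b (Finset.univ.filter fun z => a ≤ z ∧ z < b) := by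
          ext z
          simp only [Finset.mem_insert, Finset.mem_filter, Finset.mem_univ, true_and]
          constructor
          · rintro ⟨h1, h2⟩
            rcases eq_or_lt_of_le h2 with rfl | h3
            · exact Or.inl rfl
            · exact Or.inr ⟨h1, h3⟩
          · rintro (rfl | ⟨h1, h2⟩)
            · exact ⟨hab, le_rfl⟩
            · exact ⟨h1, h2.le⟩
        have hfull : ∑ z ∈ Finset.univ.filter (fun z => a ≤ z ∧ z ≤ b),
            (-1 : ℤ) ^ (rk z - rk a) * D a z = 0 := by
          rw [ELAux.sum_tset lab rk hrk_cov (x := a) (y := b) (Finset.univ.filter fun z => a ≤ z ∧ z ≤ b)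
            (by intro z; simp)]
          exact ELAux.key_identity lab (hE b) rk hrk_cov hlt
        rw [hicc, Finset.sum_insert (by simp)] at hfull
        rw [hmu, hsum1]
        linarith [hfull]
  intro x y hxy
  have h1 := key (rk y - rk x) x y hxy rfl
  have hcard : (Nat.card {l : List P // IsMaxChain' l x y ∧
      (labelSeq lab l).Chain' (fun a b => b < a)} : ℤ) = D x y := by
    simp only [hDdef]
    norm_cast
    exact (Nat.card_coe_set_eq (ELAux.decSet lab x y)).trans
      (Set.ncard_eq_toFinset_card _ (ELAux.decSet_finite lab x y))
  have h2 : (-1 : ℤ) ^ (rk y - rk x) * mu x y = D x y := by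
    rw [h1, ← mul_assoc, hsq, one_mul]
  refine ⟨by rw [h2, hcard], by rw [h2]; exact hDnn x y⟩
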